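/- Let n, m ≥ 1 and B ≤ n·m be natural numbers and let p_1 ≥ p_2 ≥ … ≥ p_n ≥ 0 be a non-increasing sequence of nonnegative reals. Consider the multiset consisting of each value p_i/m repeated m times (i.e., the products p_i · q_j for the uniform distribution q_j = 1/m). Then the sum of the B largest elements of this multiset equals Σ_{i=1}^{⌊B/m⌋} p_i + (B mod m)·p_{⌊B/m⌋+1}/m (the last term interpreted as 0 when B mod m = 0). -/

import Mathlib

open Finset

/-- Abel-type summation inequality: if `a` is nonincreasing on `0..n` and all prefix
sums of `e` are nonnegative, then `(∑ e) * a n ≤ ∑ e i * a i`. -/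
lemma cash_abel (a e : ℕ → ℝ) : ∀ n : ℕ,
    (∀ i, i + 1 ≤ n → a (i + 1) ≤ a i) →
    (∀ k, k ≤ n + 1 → 0 ≤ ∑ i ∈ range k, e i) →
    (∑ i ∈ range (n + 1), e i) * a n ≤ ∑ i ∈ range (n + 1), e i * a i := by
  intro n
  induction n with
  | zero => intro _ _; simp
  | succ n ih =>
    intro hmono hpre
    have h1 := ih (fun i hi => hmono i (by omega)) (fun k hk => hpre k (by omega))
    have h2 : (∑ i ∈ range (n + 1), e i) * a (n + 1)
        ≤ (∑ i ∈ range (n + 1), e i) * a n :=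
      mul_le_mul_of_nonneg_left (hmono n (by omega)) (hpre (n + 1) (by omega))
    rw [sum_range_succ, sum_range_succ (fun i => e i * a i), add_mul]
    linarith

/-- Fiberwise decomposition of a sum over a finset of pairs, according to the first
coordinate. -/
lemma cash_fiber_sum (n m : ℕ) (S : Finset (Fin n × Fin m)) (f : ℕ → ℝ) :
    ∑ ij ∈ S, f (ij.1 : ℕ)
      = ∑ i ∈ range n, ((S.filter fun ij => (ij.1 : ℕ) = i).card : ℝ) * f i := by
  rw [← Finset.sum_fiberwise_of_maps_to (g := fun ij : Fin n × Fin m => (ij.1 : ℕ))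
      (t := range n) (fun ij _ => mem_range.2 ij.1.isLt) (fun ij => f (ij.1 : ℕ))]
  refine sum_congr rfl fun i _ => ?_
  rw [sum_congr rfl (fun ij hij => by rw [(mem_filter.1 hij).2]), sum_const,
    nsmul_eq_mul]

/-- Each fiber has at most `m` elements. -/
lemma cash_fiber_card_le (n m : ℕ) (S : Finset (Fin n × Fin m)) (i : ℕ) :
    (S.filter fun ij => (ij.1 : ℕ) = i).card ≤ m := by
  classical
  calc (S.filter fun ij => (ij.1 : ℕ) = i).card
      ≤ (Finset.univ : Finset (Fin m)).card := by
        apply Finset.card_le_card_of_injOn (fun ij => ij.2) (fun _ _ => mem_univ _)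
        intro x hx y hy hxy
        have hx' := (mem_filter.1 hx).2
        have hy' := (mem_filter.1 hy).2
        have : x.1 = y.1 := Fin.ext (by omega)
        exact Prod.ext this hxy
    _ = m := card_univ.trans (Fintype.card_fin m)

theorem uniform_cash_top_B_sum (n m B : ℕ) (hn : 1 ≤ n) (hm : 1 ≤ m)
    (hB : B ≤ n * m)
    (p : ℕ → ℝ)
    (hmono : ∀ i i' : ℕ, 1 ≤ i → i ≤ i' → i' ≤ n → p i' ≤ p i)
    (hnonneg : ∀ i : ℕ, 1 ≤ i → i ≤ n → 0 ≤ p i) :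
    sSup {x : ℝ | ∃ S : Finset (Fin n × Fin m), S.card = B ∧
        x = ∑ ij ∈ S, p ((ij.1 : ℕ) + 1) / (m : ℝ)} =
      ∑ i ∈ Finset.Icc 1 (B / m), p i
        + ((B % m : ℕ) : ℝ) * p (B / m + 1) / (m : ℝ) := by
  classical
  set q := B / m with hq
  set r := B % m with hr
  have hqr : m * q + r = B := Nat.div_add_mod B m
  have hrm : r < m := Nat.mod_lt _ hm
  have hqmB : q * m ≤ B := Nat.div_mul_le_self B m
  have hmq : m * q = q * m := mul_comm m q
  have hBq1 : B < (q + 1) * m := by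
    have h1 : (q + 1) * m = q * m + m := by ring
    omega
  have hqn : q ≤ n := by
    by_contra h
    have h1 : (n + 1) * m ≤ q * m := Nat.mul_le_mul_right m (by omega)
    have h2 : (n + 1) * m = n * m + m := by ring
    omega
  have hm0 : (0 : ℝ) < m := by exact_mod_cast hm
  -- the greedy coefficient function and its prefix sums
  set D : ℕ → ℝ := fun k => min (B : ℝ) (k * m) with hD
  set d : ℕ → ℝ := fun i => D (i + 1) - D i with hd
  have hDsum : ∀ k : ℕ, ∑ i ∈ range k, d i = D k := by
    intro k
    rw [Finset.sum_range_sub (fun i => D i)]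
    simp [hD, Nat.cast_nonneg]
  -- value of d
  have hd_lt : ∀ i, i < q → d i = m := by
    intro i hi
    have h1 : ((i + 1) * m : ℝ) ≤ B := by
      have : (i + 1) * m ≤ B := le_trans (Nat.mul_le_mul_right m hi) hqmB
      exact_mod_cast this
    have h2 : ((i : ℝ)) * m ≤ B := by
      have : (i * m : ℝ) ≤ (i+1) * m := by
        have : (i:ℝ) ≤ i + 1 := by linarith
        nlinarith
      linarith
    simp only [hd, hD]
    rw [min_eq_right (by push_cast; linarith), min_eq_right (by push_cast; linarith)]
    push_cast; ring
  have hd_q : d q = r := by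
    have h1 : (B : ℝ) ≤ (q + 1) * m := by
      exact_mod_cast le_of_lt hBq1
    have h2 : ((q : ℝ)) * m ≤ B := by
      exact_mod_cast hqmB
    simp only [hd, hD]
    rw [min_eq_left (by push_cast at h1 ⊢; linarith), min_eq_right (by push_cast; linarith)]
    have : (B : ℝ) = m * q + r := by exact_mod_cast hqr.symm
    rw [this]; push_cast; ring
  have hd_gt : ∀ i, q < i → d i = 0 := by
    intro i hi
    have h1 : (B : ℝ) ≤ i * m := by
      have : B ≤ i * m := le_trans (le_of_lt hBq1) (Nat.mul_le_mul_right m hi)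
      exact_mod_cast this
    have h2 : (B : ℝ) ≤ (i + 1) * m := by
      have : ((i:ℝ)) * m ≤ (i+1) * m := by nlinarith [hm0]
      linarith
    simp only [hd, hD]
    rw [min_eq_left (by push_cast at h2 ⊢; linarith), min_eq_left (by push_cast at h1 ⊢; linarith)]
    ring
  -- the greedy sum equals m times the target
  have hq1n : r ≠ 0 → q + 1 ≤ n := by
    intro hr0
    by_contra h
    have h1 : n * m ≤ q * m := Nat.mul_le_mul_right m (by omega)
    omega
  have htarget : ∑ i ∈ range n, d i * p (i + 1)
      = m * (∑ i ∈ Finset.Icc 1 q, p i + (r : ℝ) * p (q + 1) / m) := by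
    have hsplit : range n = range q ∪ Ico q n := by
      rw [range_eq_Ico, range_eq_Ico, Finset.Ico_union_Ico_eq_Ico (Nat.zero_le q) hqn, ← range_eq_Ico]
    rw [hsplit, Finset.sum_union (by
      rw [range_eq_Ico]; exact Finset.Ico_disjoint_Ico_consecutive 0 q n)]
    have hA : ∑ i ∈ range q, d i * p (i + 1) = ∑ i ∈ range q, (m : ℝ) * p (i + 1) :=
      sum_congr rfl fun i hi => by rw [hd_lt i (mem_range.1 hi)]
    have hB2 : ∑ i ∈ Ico q n, d i * p (i + 1) = (r : ℝ) * p (q + 1) := by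
      rcases eq_or_lt_of_le hqn with h | h
      · have : Ico q n = ∅ := by rw [h]; simp
        rw [this, sum_empty]
        have hr0 : r = 0 := by
          have h1 : n * m ≤ q * m := Nat.mul_le_mul_right m (le_of_eq h.symm)
          omega
        simp [hr0]
      · rw [Finset.sum_eq_single_of_mem q (by rw [mem_Ico]; omega)
          (fun i hi hne => by
            rw [hd_gt i (lt_of_le_of_ne (mem_Ico.1 hi).1 (Ne.symm hne))]; ring),
          hd_q]
    rw [hA, hB2]
    have hIcc : ∑ i ∈ Finset.Icc 1 q, p i = ∑ i ∈ range q, p (i + 1) := by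
      rw [← Finset.Ico_add_one_right_eq_Icc, Finset.sum_Ico_eq_sum_range]
      simp [Nat.add_comm]
    rw [hIcc, mul_add, Finset.mul_sum]
    congr 1
    field_simp
  -- upper bound for an arbitrary S
  have hub : ∀ S : Finset (Fin n × Fin m), S.card = B →
      ∑ ij ∈ S, p ((ij.1 : ℕ) + 1) / (m : ℝ)
        ≤ ∑ i ∈ Finset.Icc 1 q, p i + (r : ℝ) * p (q + 1) / m := by
    intro S hS
    set c : ℕ → ℕ := fun i => (S.filter fun ij => (ij.1 : ℕ) = i).card with hc
    have hcsum : ∀ k, k ≤ n → ∑ i ∈ range k, c i ≤ S.card := by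
      intro k hk
      have := Finset.card_eq_sum_card_fiberwise
        (f := fun ij : Fin n × Fin m => (ij.1 : ℕ)) (s := S) (t := range n)
        (fun ij _ => mem_range.2 ij.1.isLt)
      rw [this]
      exact Finset.sum_le_sum_of_subset (by
        intro x hx; rw [mem_range] at hx ⊢; omega)
    have hctot : ∑ i ∈ range n, c i = B := by
      rw [← hS]
      exact (Finset.card_eq_sum_card_fiberwise
        (f := fun ij : Fin n × Fin m => (ij.1 : ℕ)) (s := S) (t := range n)
        (fun ij _ => mem_range.2 ij.1.isLt)).symm
    -- apply Abel with e = d - c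
    obtain ⟨n', rfl⟩ : ∃ n', n = n' + 1 := ⟨n - 1, by omega⟩
    have habel := cash_abel (fun i => p (i + 1)) (fun i => d i - (c i : ℝ)) n'
      (fun i hi => hmono (i + 1) (i + 2) (by omega) (by omega) (by omega))
      (fun k hk => by
        simp only [Finset.sum_sub_distrib, sub_nonneg]
        rw [hDsum]
        by_cases hkn : k ≤ n' + 1
        · have h1 : ∑ i ∈ range k, c i ≤ B := le_trans (hcsum k hkn) (le_of_eq hS)
          have h2 : ∑ i ∈ range k, c i ≤ k * m := by
            calc ∑ i ∈ range k, c i ≤ ∑ i ∈ range k, m :=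
                Finset.sum_le_sum fun i _ => cash_fiber_card_le _ _ _ _
              _ = k * m := by rw [Finset.sum_const, smul_eq_mul, card_range]
          refine le_min ?_ ?_
          · exact_mod_cast h1
          · push_cast; exact_mod_cast h2
        · omega)
    simp only [Finset.sum_sub_distrib] at habel
    rw [hDsum] at habel
    have hDn : D (n' + 1) = B := by
      simp only [hD]
      exact min_eq_left (by exact_mod_cast hB)
    rw [hDn] at habel
    have hcast : (∑ x ∈ range (n' + 1), ((c x : ℝ))) = (B : ℝ) := by
      exact_mod_cast hctot
    rw [hcast, sub_self, zero_mul] at habel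
    simp only [sub_mul, Finset.sum_sub_distrib] at habel
    have hkey : ∑ i ∈ range (n' + 1), (c i : ℝ) * p (i + 1)
        ≤ ∑ i ∈ range (n' + 1), d i * p (i + 1) := by linarith
    have hSsum : ∑ ij ∈ S, p ((ij.1 : ℕ) + 1) / (m : ℝ)
        = (∑ i ∈ range (n' + 1), (c i : ℝ) * p (i + 1)) / m := by
      rw [cash_fiber_sum (n' + 1) m S (fun i => p (i + 1) / m), Finset.sum_div]
      exact sum_congr rfl fun i _ => by rw [mul_div_assoc]
    rw [hSsum]
    rw [div_le_iff₀ hm0]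
    calc ∑ i ∈ range (n' + 1), (c i : ℝ) * p (i + 1)
        ≤ ∑ i ∈ range (n' + 1), d i * p (i + 1) := hkey
      _ = m * (∑ i ∈ Finset.Icc 1 q, p i + (r : ℝ) * p (q + 1) / m) := htarget
      _ = (∑ i ∈ Finset.Icc 1 q, p i + (r : ℝ) * p (q + 1) / m) * m := mul_comm _ _
  -- the optimal S₀ achieving the bound
  have hmem : ∃ S : Finset (Fin n × Fin m), S.card = B ∧
      ∑ i ∈ Finset.Icc 1 q, p i + (r : ℝ) * p (q + 1) / m
        = ∑ ij ∈ S, p ((ij.1 : ℕ) + 1) / (m : ℝ) := by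
    set S₀ : Finset (Fin n × Fin m) :=
      Finset.univ.filter fun ij => (ij.1 : ℕ) * m + (ij.2 : ℕ) < B with hS₀
    -- the fibers of S₀
    have hfiber : ∀ i : ℕ, i < n →
        (S₀.filter fun ij => (ij.1 : ℕ) = i).card
          = if i < q then m else if i = q then r else 0 := by
      intro i hi
      have hcard : (S₀.filter fun ij => (ij.1 : ℕ) = i).card
          = (Finset.univ.filter fun j : Fin m => i * m + (j : ℕ) < B).card := by
        apply Finset.card_bij (fun ij _ => ij.2)
        · intro ij hij
          simp only [hS₀, mem_filter, mem_univ, true_and] at hij ⊢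
          rw [← hij.2]; exact hij.1
        · intro x hx y hy hxy
          simp only [hS₀, mem_filter, mem_univ, true_and] at hx hy
          exact Prod.ext (Fin.ext (by omega)) hxy
        · intro j hj
          simp only [mem_filter, mem_univ, true_and] at hj
          refine ⟨(⟨i, hi⟩, j), ?_, rfl⟩
          refine Finset.mem_filter.2 ⟨Finset.mem_filter.2 ⟨Finset.mem_univ _, ?_⟩, ?_⟩ <;>
            simpa using hj
      rw [hcard]
      by_cases h1 : i < q
      · rw [if_pos h1]
        have : (Finset.univ.filter fun j : Fin m => i * m + (j : ℕ) < B) = Finset.univ := by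
          apply Finset.filter_true_of_mem
          intro j _
          have hi1 : (i + 1) * m = i * m + m := by ring
          have : i * m + (j : ℕ) < (i + 1) * m := by
            have := j.isLt; omega
          have h2 : (i + 1) * m ≤ q * m := Nat.mul_le_mul_right m h1
          omega
        rw [this, card_univ, Fintype.card_fin]
      · rw [if_neg h1]
        by_cases h2 : i = q
        · rw [if_pos h2, h2]
          have heq : (Finset.univ.filter fun j : Fin m => q * m + (j : ℕ) < B)
              = Finset.univ.filter fun j : Fin m => (j : ℕ) < r := by
            apply Finset.filter_congr
            intro j _
            have := j.isLt
            constructor <;> intro h <;> omega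
          have heq2 : (Finset.univ.filter fun j : Fin m => (j : ℕ) < r)
              = Finset.Iio (⟨r, hrm⟩ : Fin m) := by
            ext j
            simp [Finset.mem_Iio, Fin.lt_def]
          rw [heq, heq2, Fin.card_Iio]
        · rw [if_neg h2]
          have : (Finset.univ.filter fun j : Fin m => i * m + (j : ℕ) < B) = ∅ := by
            apply Finset.filter_false_of_mem
            intro j _
            have hqi : q + 1 ≤ i := by omega
            have : (q + 1) * m ≤ i * m := Nat.mul_le_mul_right m hqi
            omega
          rw [this, card_empty]
    refine ⟨S₀, ?_, ?_⟩
    · rw [Finset.card_eq_sum_card_fiberwise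
        (f := fun ij : Fin n × Fin m => (ij.1 : ℕ)) (s := S₀) (t := range n)
        (fun ij _ => mem_range.2 ij.1.isLt)]
      have : ∑ i ∈ range n, (S₀.filter fun ij => (ij.1 : ℕ) = i).card
          = ∑ i ∈ range n, (if i < q then m else if i = q then r else 0) :=
        sum_congr rfl fun i hi => hfiber i (mem_range.1 hi)
      rw [this]
      rcases eq_or_lt_of_le hqn with h | h
      · have hr0 : r = 0 := by
          have h1 : n * m ≤ q * m := Nat.mul_le_mul_right m (le_of_eq h.symm)
          omega
        have : ∑ i ∈ range n, (if i < q then m else if i = q then r else 0)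
            = ∑ i ∈ range n, m := by
          apply sum_congr rfl
          intro i hi
          rw [mem_range] at hi
          rw [if_pos (by omega)]
        rw [this, Finset.sum_const, card_range, smul_eq_mul]
        have h1 : n * m ≤ q * m := Nat.mul_le_mul_right m (le_of_eq h.symm)
        omega
      · have hsplit : range n = range q ∪ Ico q n := by
          rw [range_eq_Ico, range_eq_Ico, Finset.Ico_union_Ico_eq_Ico (Nat.zero_le q) hqn, ← range_eq_Ico]
        rw [hsplit, Finset.sum_union (by
          rw [range_eq_Ico]; exact Finset.Ico_disjoint_Ico_consecutive 0 q n)]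
        have e1 : ∑ i ∈ range q, (if i < q then m else if i = q then r else 0)
            = q * m := by
          rw [Finset.sum_congr rfl (fun i hi => if_pos (mem_range.1 hi)),
            Finset.sum_const, card_range, smul_eq_mul]
        have e2 : ∑ i ∈ Ico q n, (if i < q then m else if i = q then r else 0) = r := by
          rw [Finset.sum_eq_single_of_mem q (by rw [mem_Ico]; omega)
            (fun i hi hne => by
              have := mem_Ico.1 hi
              rw [if_neg (by omega), if_neg hne])]
          rw [if_neg (by omega), if_pos rfl]
        rw [e1, e2]; omega
    · rw [cash_fiber_sum n m S₀ (fun i => p (i + 1) / m)]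
      have : ∑ i ∈ range n, ((S₀.filter fun ij => (ij.1 : ℕ) = i).card : ℝ) * (p (i + 1) / m)
          = ∑ i ∈ range n, ((if i < q then m else if i = q then r else 0 : ℕ) : ℝ)
              * (p (i + 1) / m) :=
        sum_congr rfl fun i hi => by rw [hfiber i (mem_range.1 hi)]
      rw [this]
      rcases eq_or_lt_of_le hqn with h | h
      · have hr0 : r = 0 := by
          have h1 : n * m ≤ q * m := Nat.mul_le_mul_right m (le_of_eq h.symm)
          omega
        have e1 : ∑ i ∈ range n, ((if i < q then m else if i = q then r else 0 : ℕ) : ℝ)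
              * (p (i + 1) / m) = ∑ i ∈ range n, p (i + 1) := by
          apply sum_congr rfl
          intro i hi
          rw [mem_range] at hi
          rw [if_pos (by omega)]
          field_simp
        rw [e1, hr0]
        have hIcc : ∑ i ∈ Finset.Icc 1 q, p i = ∑ i ∈ range q, p (i + 1) := by
          rw [← Finset.Ico_add_one_right_eq_Icc, Finset.sum_Ico_eq_sum_range]
          simp [Nat.add_comm]
        rw [hIcc, ← h]
        simp
      · have hsplit : range n = range q ∪ Ico q n := by
          rw [range_eq_Ico, range_eq_Ico, Finset.Ico_union_Ico_eq_Ico (Nat.zero_le q) hqn, ← range_eq_Ico]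
        rw [hsplit, Finset.sum_union (by
          rw [range_eq_Ico]; exact Finset.Ico_disjoint_Ico_consecutive 0 q n)]
        have e1 : ∑ i ∈ range q, ((if i < q then m else if i = q then r else 0 : ℕ) : ℝ)
              * (p (i + 1) / m) = ∑ i ∈ range q, p (i + 1) := by
          apply sum_congr rfl
          intro i hi
          rw [if_pos (mem_range.1 hi)]
          field_simp
        have e2 : ∑ i ∈ Ico q n, ((if i < q then m else if i = q then r else 0 : ℕ) : ℝ)
              * (p (i + 1) / m) = (r : ℝ) * p (q + 1) / m := by
          rw [Finset.sum_eq_single_of_mem q (by rw [mem_Ico]; omega)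
            (fun i hi hne => by
              have := mem_Ico.1 hi
              rw [if_neg (by omega), if_neg hne]; simp)]
          rw [if_neg (by omega), if_pos rfl, mul_div_assoc]
        rw [e1, e2]
        have hIcc : ∑ i ∈ Finset.Icc 1 q, p i = ∑ i ∈ range q, p (i + 1) := by
          rw [← Finset.Ico_add_one_right_eq_Icc, Finset.sum_Ico_eq_sum_range]
          simp [Nat.add_comm]
        rw [hIcc]
  -- conclude via IsGreatest
  apply IsGreatest.csSup_eq
  constructor
  · exact hmem
  · rintro x ⟨S, hScard, rfl⟩
    exact hub S hScard
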